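/- Let t be a tracer spectrum (2D framework) with associated dissipation rate χ and wavenumber κ_θ, let μ,η>0, set κ_β=(η/μ³)^{1/6}, and let c>0. If κ_θ² ≥ c·κ_β², then for every κ>0 the dyadic shell sum satisfies 𝐭_{κ,2κ} ≤ (1/c)·χ·η^{-1/3}. (Theorem 5.2 of the paper, the partial converse to the tracer power law.) -/

import Mathlib

open Real

/-- Euclidean norm of a lattice vector `k ∈ ℤ^d`. -/
noncomputable def knorm {d : ℕ} (k : Fin d → ℤ) : ℝ :=
  Real.sqrt (∑ i, ((k i : ℝ)) ^ 2)

/-- Shell sum `𝐭_{κ1,κ2}` (finite upper end). -/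
noncomputable def shellSum (d : ℕ) (L κ0 : ℝ) (t : (Fin d → ℤ) → ℝ) (κ1 κ2 : ℝ) : ℝ :=
  L ^ (-(d : ℤ)) * ∑' k : Fin d → ℤ,
    (if κ1 ≤ κ0 * knorm k ∧ κ0 * knorm k < κ2 then t k else 0)

/-- Shell sum `𝐭_{κ1,∞}`. -/
noncomputable def shellSumTop (d : ℕ) (L κ0 : ℝ) (t : (Fin d → ℤ) → ℝ) (κ1 : ℝ) : ℝ :=
  L ^ (-(d : ℤ)) * ∑' k : Fin d → ℤ, (if κ1 ≤ κ0 * knorm k then t k else 0)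

/-- Tracer dissipation rate `χ = μ L^{-d} κ0² Σ_k |k|² t(k)`. -/
noncomputable def chiRate (d : ℕ) (L κ0 μ : ℝ) (t : (Fin d → ℤ) → ℝ) : ℝ :=
  μ * L ^ (-(d : ℤ)) * κ0 ^ 2 * ∑' k : Fin d → ℤ, knorm k ^ 2 * t k

/-- Indicator wavenumber squared, `κ_θ² = κ0² Σ|k|²t(k) / Σ t(k)`. -/
noncomputable def kThetaSq (d : ℕ) (κ0 : ℝ) (t : (Fin d → ℤ) → ℝ) : ℝ :=
  κ0 ^ 2 * (∑' k : Fin d → ℤ, knorm k ^ 2 * t k) / (∑' k : Fin d → ℤ, t k)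

/-- A (discrete) tracer spectrum: nonnegative, vanishing at `k = 0`, not identically
zero, and with `Σ (1+|k|²) t(k) < ∞`. -/
structure IsTracerSpectrum (d : ℕ) (t : (Fin d → ℤ) → ℝ) : Prop where
  nonneg : ∀ k, 0 ≤ t k
  map_zero : t 0 = 0
  exists_ne_zero : ∃ k, t k ≠ 0
  summable : Summable fun k : Fin d → ℤ => (1 + knorm k ^ 2) * t k

/-- Theorem 5.2: if `κ_θ² ≥ c κ_β²` then every dyadic shell sum satisfies
`𝐭_{κ,2κ} ≤ (1/c) χ η^{-1/3}`. -/
theorem tracer_2D_partial_converse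
    (L μ η c κ0 κβ : ℝ) (t : (Fin 2 → ℤ) → ℝ)
    (hL : 0 < L) (hμ : 0 < μ) (hη : 0 < η) (hc : 0 < c)
    (ht : IsTracerSpectrum 2 t)
    (hκ0 : κ0 = 2 * π / L)
    (hκβ : κβ = (η / μ ^ 3) ^ (1 / 6 : ℝ))
    (h : c * κβ ^ 2 ≤ kThetaSq 2 κ0 t) :
    ∀ κ : ℝ, 0 < κ →
      shellSum 2 L κ0 t κ (2 * κ) ≤ (1 / c) * chiRate 2 L κ0 μ t * η ^ (-1 / 3 : ℝ) := by
  intro κ hκ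
  obtain ⟨hnn, hz, ⟨k0, hk0⟩, hsum⟩ := ht
  have hsum_t : Summable t := by
    apply hsum.of_nonneg_of_le hnn
    intro k
    nlinarith [hnn k, sq_nonneg (knorm k)]
  have hsum_S : Summable fun k : Fin 2 → ℤ => knorm k ^ 2 * t k := by
    apply hsum.of_nonneg_of_le
    · intro k; exact mul_nonneg (sq_nonneg _) (hnn k)
    · intro k; nlinarith [hnn k]
  set T := ∑' k : Fin 2 → ℤ, t k with hT
  set S := ∑' k : Fin 2 → ℤ, knorm k ^ 2 * t k with hS
  have hT_pos : 0 < T := Summable.tsum_pos hsum_t hnn k0 (lt_of_le_of_ne (hnn k0) (Ne.symm hk0))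
  have hS_nonneg : 0 ≤ S := tsum_nonneg fun k => mul_nonneg (sq_nonneg _) (hnn k)
  have hL2 : (0:ℝ) < L ^ (-(2:ℤ)) := zpow_pos hL _
  have hshell : shellSum 2 L κ0 t κ (2*κ) ≤ L ^ (-(2:ℤ)) * T := by
    unfold shellSum
    push_cast
    apply mul_le_mul_of_nonneg_left _ hL2.le
    apply Summable.tsum_le_tsum _ _ hsum_t
    · intro k; split_ifs with hk
      · exact le_rfl
      · exact hnn k
    · apply hsum_t.of_nonneg_of_le
      · intro k; split_ifs with hk
        · exact hnn k
        · exact le_rfl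
      · intro k; split_ifs with hk
        · exact le_rfl
        · exact hnn k
  have hμ3 : (0:ℝ) < μ ^ 3 := pow_pos hμ 3
  have hx : (0:ℝ) < η / μ ^ 3 := div_pos hη hμ3
  have hA : (0:ℝ) < η ^ (1/3:ℝ) := Real.rpow_pos_of_pos hη _
  have hκβ2 : κβ ^ 2 = η ^ (1/3:ℝ) / μ := by
    rw [hκβ, ← Real.rpow_natCast ((η / μ ^ 3) ^ (1/6:ℝ)) 2, ← Real.rpow_mul hx.le]
    norm_num
    rw [Real.div_rpow hη.le hμ3.le, ← Real.rpow_natCast μ 3, ← Real.rpow_mul hμ.le]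
    norm_num
  have hηneg : η ^ (-1/3:ℝ) = (η ^ (1/3:ℝ))⁻¹ := by
    rw [show (-1/3 : ℝ) = -(1/3) by norm_num, Real.rpow_neg hη.le]
  rw [kThetaSq, hκβ2, ← hS, ← hT] at h
  have key : c * (η ^ (1/3:ℝ) / μ) * T ≤ κ0 ^ 2 * S := (le_div_iff₀ hT_pos).mp h
  have key' : c * η ^ (1/3:ℝ) * T ≤ μ * (κ0 ^ 2 * S) := by
    have := mul_le_mul_of_nonneg_left key hμ.le
    calc c * η ^ (1/3:ℝ) * T = μ * (c * (η ^ (1/3:ℝ) / μ) * T) := by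
          field_simp
      _ ≤ μ * (κ0 ^ 2 * S) := this
  calc shellSum 2 L κ0 t κ (2*κ) ≤ L ^ (-(2:ℤ)) * T := hshell
    _ ≤ (1 / c) * chiRate 2 L κ0 μ t * η ^ (-1/3:ℝ) := by
        rw [chiRate, ← hS, hηneg]
        show L ^ (-(2:ℤ)) * T ≤ (1/c) * (μ * L ^ (-(2:ℤ)) * κ0 ^ 2 * S) * (η ^ (1/3:ℝ))⁻¹
        rw [show (1/c) * (μ * L ^ (-(2:ℤ)) * κ0 ^ 2 * S) * (η ^ (1/3:ℝ))⁻¹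
            = L ^ (-(2:ℤ)) * ((μ * (κ0 ^ 2 * S)) / (c * η ^ (1/3:ℝ))) by
          field_simp]
        apply mul_le_mul_of_nonneg_left _ hL2.le
        rw [le_div_iff₀ (by positivity)]
        linarith [key']
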